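/- Let h, v ∈ ℝ^n and suppose there is a partition [n] = I₁ ∪ ... ∪ I_k and vectors h̄, v̄ ∈ ℝ^k with h = ∑_i h̄_i·1_{I_i} and v = ∑_i v̄_i·1_{I_i} (h and v are constant on each block). Let f̄_i = √|I_i|. If ū ∈ ℝ^k maximizes ⟨h̄ ∘ f̄ ∘ f̄, w̄⟩ over w̄ with ‖(f̄ ∘ v̄) ∘ w̄‖₂ + ‖w̄‖_∞ ≤ 1, and u = ∑_i ū_i·1_{I_i}, then ⟨h, u⟩ = max{⟨h, w⟩ : w ∈ ℝ^n, ‖v ∘ w‖₂ + ‖w‖_∞ ≤ 1}. -/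

import Mathlib

/-- Lemma 7.5 of [BLN+20]: maximizing a linear functional over the mixed
`(ℓ₂+ℓ∞)`-ball with block-constant data reduces to a `k`-dimensional problem
with frequency weights `f̄_i = √|I_i|`; the block-constant lift of a
`k`-dimensional maximizer attains the `n`-dimensional optimum. -/
theorem stmt13 (n k : ℕ) (p : Fin n → Fin k)
    (hbar vbar : Fin k → ℝ) (h v : Fin n → ℝ)
    (hh : ∀ j, h j = hbar (p j)) (hv : ∀ j, v j = vbar (p j))
    (fbar : Fin k → ℝ)
    (hf : ∀ i, fbar i =
      Real.sqrt ((Finset.univ.filter (fun j => p j = i)).card))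
    (ubar : Fin k → ℝ)
    (hufeas : Real.sqrt (∑ i, (fbar i * vbar i * ubar i) ^ 2) + ‖ubar‖ ≤ 1)
    (humax : ∀ wbar : Fin k → ℝ,
      Real.sqrt (∑ i, (fbar i * vbar i * wbar i) ^ 2) + ‖wbar‖ ≤ 1 →
      (∑ i, hbar i * fbar i * fbar i * wbar i)
        ≤ ∑ i, hbar i * fbar i * fbar i * ubar i)
    (u : Fin n → ℝ) (hu : ∀ j, u j = ubar (p j)) :
    IsGreatest {r : ℝ | ∃ w : Fin n → ℝ,
        Real.sqrt (∑ j, (v j * w j) ^ 2) + ‖w‖ ≤ 1 ∧ r = ∑ j, h j * w j}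
      (∑ j, h j * u j) := by
  classical
  set I : Fin k → Finset (Fin n) := fun i => Finset.univ.filter (fun j => p j = i) with hI
  have hfsq : ∀ i, fbar i * fbar i = ((I i).card : ℝ) := fun i => by
    rw [hf]; exact Real.mul_self_sqrt (Nat.cast_nonneg _)
  have fib : ∀ (g : Fin n → ℝ), ∑ j, g j = ∑ i, ∑ j ∈ I i, g j := fun g =>
    (Finset.sum_fiberwise Finset.univ p g).symm
  have hconst : ∀ (i : Fin k) (x : Fin n → ℝ) (xbar : Fin k → ℝ),
      (∀ j, x j = xbar (p j)) → ∀ j ∈ I i, x j = xbar i := by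
    intro i x xbar hx j hj
    simp only [hI, Finset.mem_filter] at hj
    rw [hx, hj.2]
  -- generic lift identities
  have liftsum : ∀ (i : Fin k) (x : Fin n → ℝ) (xbar : Fin k → ℝ),
      (∀ j, x j = xbar (p j)) → ∑ j ∈ I i, x j = ((I i).card : ℝ) * xbar i := by
    intro i x xbar hx
    rw [Finset.sum_congr rfl (hconst i x xbar hx), Finset.sum_const, nsmul_eq_mul]
  constructor
  · refine ⟨u, ?_, ?_⟩
    · have e1 : ∑ j, (v j * u j) ^ 2 = ∑ i, (fbar i * vbar i * ubar i) ^ 2 := by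
        rw [fib]
        refine Finset.sum_congr rfl fun i _ => ?_
        rw [Finset.sum_congr rfl (fun j hj => by
            rw [hconst i v vbar hv j hj, hconst i u ubar hu j hj]),
          Finset.sum_const, nsmul_eq_mul,
          show (fbar i * vbar i * ubar i) ^ 2
              = (fbar i * fbar i) * (vbar i * ubar i) ^ 2 by ring, hfsq]
      have hnu : ‖u‖ ≤ ‖ubar‖ := by
        rw [pi_norm_le_iff_of_nonneg (norm_nonneg _)]
        intro j
        rw [hu]
        exact norm_le_pi_norm ubar (p j)
      rw [e1]
      linarith
    · rfl
  · rintro r ⟨w, hwfeas, rfl⟩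
    set wbar : Fin k → ℝ := fun i => (∑ j ∈ I i, w j) / ((I i).card : ℝ) with hwbar
    have hnw : ‖wbar‖ ≤ ‖w‖ := by
      rw [pi_norm_le_iff_of_nonneg (norm_nonneg _)]
      intro i
      rcases Nat.eq_zero_or_pos (I i).card with h0 | h0
      · simp [hwbar, h0, norm_nonneg]
      · have hc : (0 : ℝ) < ((I i).card : ℝ) := by exact_mod_cast h0
        rw [Real.norm_eq_abs, hwbar]
        rw [abs_div, abs_of_pos hc, div_le_iff₀ hc]
        calc |∑ j ∈ I i, w j| ≤ ∑ j ∈ I i, |w j| := Finset.abs_sum_le_sum_abs _ _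
          _ ≤ ∑ j ∈ I i, ‖w‖ := Finset.sum_le_sum fun j _ => by
              rw [← Real.norm_eq_abs]; exact norm_le_pi_norm w j
          _ = ‖w‖ * ((I i).card : ℝ) := by rw [Finset.sum_const, nsmul_eq_mul]; ring
    have hl2 : ∀ i, (fbar i * vbar i * wbar i) ^ 2 ≤ ∑ j ∈ I i, (v j * w j) ^ 2 := by
      intro i
      rcases Nat.eq_zero_or_pos (I i).card with h0 | h0
      · have hfz : fbar i = 0 := by
          rw [hf]; change Real.sqrt (((I i).card : ℕ) : ℝ) = 0; rw [h0]; simp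
        rw [hfz]
        simp only [zero_mul, ne_eq, OfNat.ofNat_ne_zero, not_false_eq_true, zero_pow]
        positivity
      · have hc : (0 : ℝ) < ((I i).card : ℝ) := by exact_mod_cast h0
        have cs : (∑ j ∈ I i, w j) ^ 2 ≤ ((I i).card : ℝ) * ∑ j ∈ I i, w j ^ 2 :=
          sq_sum_le_card_mul_sum_sq
        have hS : ∑ j ∈ I i, w j = wbar i * ((I i).card : ℝ) :=
          (div_mul_cancel₀ _ hc.ne').symm
        rw [hS] at cs
        have h1 : ((I i).card : ℝ) * wbar i ^ 2 ≤ ∑ j ∈ I i, w j ^ 2 := by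
          have := (mul_le_mul_iff_of_pos_left hc).mp (by nlinarith : ((I i).card : ℝ) *
            (((I i).card : ℝ) * wbar i ^ 2) ≤ ((I i).card : ℝ) * ∑ j ∈ I i, w j ^ 2)
          exact this
        have e : ∑ j ∈ I i, (v j * w j) ^ 2 = vbar i ^ 2 * ∑ j ∈ I i, w j ^ 2 := by
          rw [Finset.mul_sum]
          exact Finset.sum_congr rfl fun j hj => by rw [hconst i v vbar hv j hj]; ring
        rw [e, show (fbar i * vbar i * wbar i) ^ 2
            = vbar i ^ 2 * ((fbar i * fbar i) * wbar i ^ 2) by ring, hfsq]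
        exact mul_le_mul_of_nonneg_left h1 (sq_nonneg _)
    have hl2sum : ∑ i, (fbar i * vbar i * wbar i) ^ 2 ≤ ∑ j, (v j * w j) ^ 2 := by
      rw [fib]
      exact Finset.sum_le_sum fun i _ => hl2 i
    have hwbfeas : Real.sqrt (∑ i, (fbar i * vbar i * wbar i) ^ 2) + ‖wbar‖ ≤ 1 := by
      have := Real.sqrt_le_sqrt hl2sum
      linarith
    have e3 : ∑ j, h j * w j = ∑ i, hbar i * fbar i * fbar i * wbar i := by
      rw [fib]
      refine Finset.sum_congr rfl fun i _ => ?_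
      have : ∑ j ∈ I i, h j * w j = hbar i * ∑ j ∈ I i, w j := by
        rw [Finset.mul_sum]
        exact Finset.sum_congr rfl fun j hj => by rw [hconst i h hbar hh j hj]
      rw [this, show hbar i * fbar i * fbar i * wbar i
          = hbar i * ((fbar i * fbar i) * wbar i) by ring, hfsq]
      rcases Nat.eq_zero_or_pos (I i).card with h0 | h0
      · have : I i = ∅ := Finset.card_eq_zero.mp h0
        simp [this, h0]
      · have hc : (0 : ℝ) < ((I i).card : ℝ) := by exact_mod_cast h0
        rw [hwbar]
        field_simp
    have e4 : ∑ j, h j * u j = ∑ i, hbar i * fbar i * fbar i * ubar i := by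
      rw [fib]
      refine Finset.sum_congr rfl fun i _ => ?_
      rw [Finset.sum_congr rfl (fun j hj => by
          rw [hconst i h hbar hh j hj, hconst i u ubar hu j hj]),
        Finset.sum_const, nsmul_eq_mul,
        show hbar i * fbar i * fbar i * ubar i
            = (fbar i * fbar i) * (hbar i * ubar i) by ring, hfsq]
    rw [e3, e4]
    exact humax wbar hwbfeas
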